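/- For integers m, n with 0 < m < n, the sum over k = 1 to n−1 of sin^{2m}(πk/n) equals (n/4^m) · binom(2m, m). -/

import Mathlib

open Real Finset

theorem sum_sin_pow (m n : ℕ) (hm : 0 < m) (hmn : m < n) :
    ∑ k ∈ Finset.Ico 1 n, Real.sin (Real.pi * k / n) ^ (2 * m) =
      ((n : ℝ) / 4 ^ m) * Nat.choose (2 * m) m := by
  have hn0 : 0 < n := lt_trans hm hmn
  -- extend sum to range n (the k = 0 term vanishes)
  have hext : ∑ k ∈ Finset.Ico 1 n, Real.sin (Real.pi * k / n) ^ (2 * m)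
      = ∑ k ∈ Finset.range n, Real.sin (Real.pi * k / n) ^ (2 * m) := by
    rw [Finset.range_eq_Ico, Finset.sum_eq_sum_Ico_succ_bot hn0]
    simp [hm.ne']
  rw [hext]
  set ζ : ℂ := Complex.exp (2 * Real.pi * Complex.I / n) with hζdef
  have hζ : IsPrimitiveRoot ζ n := Complex.isPrimitiveRoot_exp n hn0.ne'
  -- per-term expansion
  have hterm : ∀ k : ℕ, (Complex.sin ((Real.pi : ℂ) * k / n)) ^ (2 * m)
      = ∑ j ∈ Finset.range (2 * m + 1),
          ((-1 : ℂ) ^ (m + j) * (Nat.choose (2 * m) j : ℂ) / 4 ^ m)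
            * (ζ ^ ((j : ℤ) - m)) ^ k := by
    intro k
    set w : ℂ := Complex.exp ((Real.pi : ℂ) * k / n * Complex.I) with hw
    have hw0 : w ≠ 0 := Complex.exp_ne_zero _
    set z : ℂ := ζ ^ k with hzdef
    have hz : w ^ 2 = z := by
      rw [hw, hzdef, hζdef, ← Complex.exp_nat_mul, ← Complex.exp_nat_mul]
      congr 1
      push_cast
      ring
    have hz0 : z ≠ 0 := by rw [← hz]; exact pow_ne_zero _ hw0
    have hinv : Complex.exp (-((Real.pi : ℂ) * k / n) * Complex.I) * w = 1 := by
      rw [hw, ← Complex.exp_add,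
        show -((Real.pi : ℂ) * k / n) * Complex.I + (Real.pi : ℂ) * k / n * Complex.I = 0 by ring,
        Complex.exp_zero]
    have h2 : Complex.sin ((Real.pi : ℂ) * k / n) * (2 * w) = (1 - z) * Complex.I := by
      rw [← hz]
      simp only [Complex.sin, ← hw]
      linear_combination Complex.I * hinv
    have h3 : Complex.sin ((Real.pi : ℂ) * k / n) ^ (2 * m) * (4 ^ m * z ^ m)
        = (1 - z) ^ (2 * m) * (-1 : ℂ) ^ m := by
      have := congrArg (· ^ (2 * m)) h2
      simp only [mul_pow] at this
      calc Complex.sin ((Real.pi : ℂ) * k / n) ^ (2 * m) * (4 ^ m * z ^ m)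
          = Complex.sin ((Real.pi : ℂ) * k / n) ^ (2 * m) * (2 ^ (2 * m) * w ^ (2 * m)) := by
            rw [show (4 : ℂ) ^ m = 2 ^ (2 * m) by rw [pow_mul]; norm_num, ← hz, ← pow_mul]
        _ = (1 - z) ^ (2 * m) * Complex.I ^ (2 * m) := by
            rw [← mul_assoc]
            rw [show Complex.sin ((Real.pi : ℂ) * k / n) ^ (2 * m) * 2 ^ (2 * m) * w ^ (2 * m)
              = (Complex.sin ((Real.pi : ℂ) * k / n)) ^ (2*m) * ((2*w) ^ (2*m)) by rw [mul_pow]; ring]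
            rw [← mul_pow, h2, mul_pow]
        _ = (1 - z) ^ (2 * m) * (-1 : ℂ) ^ m := by
            congr 1
            rw [pow_mul, Complex.I_sq]
    have hbinom : (1 - z) ^ (2 * m)
        = ∑ j ∈ Finset.range (2 * m + 1), (-1 : ℂ) ^ j * (Nat.choose (2 * m) j : ℂ) * z ^ j := by
      rw [show (1 : ℂ) - z = -z + 1 by ring, add_pow]
      refine Finset.sum_congr rfl fun j hj => ?_
      rw [neg_pow, one_pow]
      ring
    have hrk : ∀ j : ℕ, (ζ ^ ((j : ℤ) - m)) ^ k = z ^ j * (z ^ m)⁻¹ := by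
      intro j
      rw [← zpow_natCast (ζ ^ ((j : ℤ) - m)) k, ← zpow_mul,
        show ((j : ℤ) - m) * k = (k : ℤ) * ((j : ℤ) - m) by ring,
        zpow_mul, zpow_natCast, ← hzdef, zpow_sub₀ hz0, zpow_natCast, zpow_natCast]
      rfl
    -- finish per-term
    have h4m : (4 : ℂ) ^ m * z ^ m ≠ 0 :=
      mul_ne_zero (pow_ne_zero _ (by norm_num)) (pow_ne_zero _ hz0)
    rw [eq_comm]
    rw [show Complex.sin ((Real.pi : ℂ) * k / n) ^ (2 * m)
        = (1 - z) ^ (2 * m) * (-1 : ℂ) ^ m / (4 ^ m * z ^ m) by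
      rw [eq_div_iff h4m, h3]]
    rw [hbinom, Finset.sum_mul, Finset.sum_div]
    refine Finset.sum_congr rfl fun j hj => ?_
    rw [hrk j]
    rw [pow_add]
    field_simp
  -- the complex identity
  have key : ∑ k ∈ Finset.range n, (Complex.sin ((Real.pi : ℂ) * k / n)) ^ (2 * m)
      = ((n : ℂ) / 4 ^ m) * Nat.choose (2 * m) m := by
    simp only [hterm]
    rw [Finset.sum_comm]
    have hgeom : ∀ j ∈ Finset.range (2 * m + 1),
        ((-1 : ℂ) ^ (m + j) * (Nat.choose (2 * m) j : ℂ) / 4 ^ m)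
          * ∑ k ∈ Finset.range n, (ζ ^ ((j : ℤ) - m)) ^ k
        = if j = m then ((n : ℂ) / 4 ^ m) * Nat.choose (2 * m) m else 0 := by
      intro j hj
      rcases eq_or_ne j m with rfl | hne
      · rw [if_pos rfl]
        simp only [sub_self, zpow_zero, one_pow, Finset.sum_const,
          Finset.card_range, nsmul_eq_mul, mul_one]
        rw [← two_mul, pow_mul, neg_one_sq, one_pow, one_mul]
        ring
      · rw [if_neg hne]
        have hd : ((j : ℤ) - m) ≠ 0 := sub_ne_zero.mpr (by exact_mod_cast hne)
        have hr1 : ζ ^ ((j : ℤ) - m) ≠ 1 := by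
          rw [Ne, hζ.zpow_eq_one_iff_dvd]
          intro hdvd
          obtain ⟨c, hc⟩ := hdvd
          have hj' : j ≤ 2 * m := Nat.lt_succ_iff.mp (Finset.mem_range.mp hj)
          have hne' : (j : ℤ) ≠ m := by exact_mod_cast hne
          rcases lt_trichotomy c 0 with h | h | h
          · nlinarith [Int.le_of_lt h, (show (0:ℤ) ≤ j from Int.natCast_nonneg j),
              (show (m:ℤ) < n from by exact_mod_cast hmn)]
          · rw [h, mul_zero] at hc; omega
          · nlinarith [(show (1:ℤ) ≤ c from h), (show (j:ℤ) ≤ 2 * m from by exact_mod_cast hj'),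
              (show (m:ℤ) < n from by exact_mod_cast hmn)]
        have hrn : (ζ ^ ((j : ℤ) - m)) ^ n = 1 := by
          rw [← zpow_natCast, ← zpow_mul,
            show ((j : ℤ) - m) * n = (n : ℤ) * ((j : ℤ) - m) by ring,
            zpow_mul, zpow_natCast, hζ.pow_eq_one, one_zpow]
        rw [geom_sum_eq hr1, hrn, sub_self, zero_div, mul_zero]
    have step : ∀ j ∈ Finset.range (2 * m + 1),
        ∑ k ∈ Finset.range n,
            ((-1 : ℂ) ^ (m + j) * (Nat.choose (2 * m) j : ℂ) / 4 ^ m) * (ζ ^ ((j : ℤ) - m)) ^ k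
          = if j = m then ((n : ℂ) / 4 ^ m) * (Nat.choose (2 * m) m : ℂ) else 0 := fun j hj => by
      rw [← Finset.mul_sum]; exact hgeom j hj
    rw [Finset.sum_congr rfl step, Finset.sum_ite_eq' (Finset.range (2 * m + 1)) m,
      if_pos (Finset.mem_range.mpr (by omega))]
  -- descend to ℝ
  apply Complex.ofReal_injective
  push_cast [Complex.ofReal_sin]
  exact key
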